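/- (Rotation of points.) Let u, v, p ∈ EuclideanSpace ℝ (Fin 3) with ⟨u,v⟩ = 0 and ‖u‖ = ‖v‖ = 1. Define I₁ := (1/2)•( (E(u)+E*(u))∘(E(v)+E*(v)) − (E(v)+E*(v))∘(E(u)+E*(u)) ) and I₂ := (1/2)•( (E(u)−E*(u))∘(E(v)−E*(v)) − (E(v)−E*(v))∘(E(u)−E*(u)) ). For θ ∈ ℝ set Ψ := (cos(θ/2)•id + sin(θ/2)•I₁) ∘ (cos(θ/2)•id − sin(θ/2)•I₂) and Ψ' := (cos(θ/2)•id − sin(θ/2)•I₁) ∘ (cos(θ/2)•id + sin(θ/2)•I₂). Writing p_u := ⟨p,u⟩, p_v := ⟨p,v⟩ and p⊥ := p − p_u•u − p_v•v, we have Ψ ∘ E(p) ∘ Ψ' = E( p⊥ + (cos θ · p_u + sin θ · p_v)•u + (cos θ · p_v − sin θ · p_u)•v ). (Since I₁² = I₂² = −id and I₁, I₂ commute, Ψ = e^{θR/2} with R = [u,v*] − [v,u*] and Ψ' = Ψ~, so this is the paper's circular rotation by angle θ in the plane of u and v.) -/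

import Mathlib

open scoped RealInnerProductSpace

noncomputable section

/-- Left exterior multiplication by a vector on the exterior algebra of `ℝ³`. -/
def wedgeOp (v : EuclideanSpace ℝ (Fin 3)) :
    ExteriorAlgebra ℝ (EuclideanSpace ℝ (Fin 3)) →ₗ[ℝ]
      ExteriorAlgebra ℝ (EuclideanSpace ℝ (Fin 3)) :=
  LinearMap.mulLeft ℝ (ExteriorAlgebra.ι ℝ v)

/-- Left contraction (interior product) along the functional `⟪v, ·⟫`. -/
def contrOp (v : EuclideanSpace ℝ (Fin 3)) :
    ExteriorAlgebra ℝ (EuclideanSpace ℝ (Fin 3)) →ₗ[ℝ]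
      ExteriorAlgebra ℝ (EuclideanSpace ℝ (Fin 3)) :=
  CliffordAlgebra.contractLeft (innerₗ (EuclideanSpace ℝ (Fin 3)) v)

/-- The operator `I₁ = (1/2)[E(u)+E*(u), E(v)+E*(v)]`. -/
def rotGen1 (u v : EuclideanSpace ℝ (Fin 3)) :
    ExteriorAlgebra ℝ (EuclideanSpace ℝ (Fin 3)) →ₗ[ℝ]
      ExteriorAlgebra ℝ (EuclideanSpace ℝ (Fin 3)) :=
  (1 / 2 : ℝ) • ((wedgeOp u + contrOp u) ∘ₗ (wedgeOp v + contrOp v)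
    - (wedgeOp v + contrOp v) ∘ₗ (wedgeOp u + contrOp u))

/-- The operator `I₂ = (1/2)[E(u)−E*(u), E(v)−E*(v)]`. -/
def rotGen2 (u v : EuclideanSpace ℝ (Fin 3)) :
    ExteriorAlgebra ℝ (EuclideanSpace ℝ (Fin 3)) →ₗ[ℝ]
      ExteriorAlgebra ℝ (EuclideanSpace ℝ (Fin 3)) :=
  (1 / 2 : ℝ) • ((wedgeOp u - contrOp u) ∘ₗ (wedgeOp v - contrOp v)
    - (wedgeOp v - contrOp v) ∘ₗ (wedgeOp u - contrOp u))

namespace RotAux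

set_option linter.unusedSectionVars false

variable {A : Type*} [Ring A] [Algebra ℝ A]

/-- `c•1 + s•J` -/
def rr (c s : ℝ) (J : A) : A := c • (1:A) + s • J

lemma rr_eq_sub (c s : ℝ) (J : A) : rr c (-s) J = c • (1:A) - s • J := by
  simp [rr, sub_eq_add_neg]

lemma comm_mul (x y z : A) (h1 : x * z = z * x) (h2 : y * z = z * y) :
    (x * y) * z = z * (x * y) := by
  rw [mul_assoc, h2, ← mul_assoc, h1, mul_assoc]

lemma anti_anti_comm (a b x : A) (h1 : a * x = -(x * a)) (h2 : b * x = -(x * b)) :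
    (a * b) * x = x * (a * b) := by
  rw [mul_assoc, h2, mul_neg, ← mul_assoc, h1, neg_mul, neg_neg, mul_assoc]

lemma sq_of_anti (a b : A) (hba : b * a = -(a * b)) :
    (a * b) * (a * b) = -((a * a) * (b * b)) := by
  calc (a*b)*(a*b) = a*((b*a)*b) := by rw [mul_assoc, ← mul_assoc b a b]
  _ = -((a*a)*(b*b)) := by rw [hba, neg_mul, mul_neg, ← mul_assoc, ← mul_assoc, mul_assoc]

lemma swap_sqP (a b : A) (hbb : b * b = 1) (hba : b * a = -(a * b)) :
    (a * b) * b = -(b * (a * b)) := by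
  have h1 : (a*b)*b = a := by rw [mul_assoc, hbb, mul_one]
  have h2 : b*(a*b) = -a := by rw [← mul_assoc, hba, neg_mul, mul_assoc, hbb, mul_one]
  rw [h1, h2, neg_neg]

lemma swap_sqN (a b : A) (hbb : b * b = -1) (hba : b * a = -(a * b)) :
    (a * b) * b = -(b * (a * b)) := by
  have h1 : (a*b)*b = -a := by rw [mul_assoc, hbb, mul_neg_one]
  have h2 : b*(a*b) = a := by
    rw [← mul_assoc, hba, neg_mul, mul_assoc, hbb, mul_neg_one, neg_neg]
  rw [h1, h2]

lemma rr_comm (c s t w : ℝ) (J K : A) (h : K * J = J * K) :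
    rr c s K * rr t w J = rr t w J * rr c s K := by
  simp only [rr, mul_add, add_mul, smul_mul_assoc, mul_smul_comm, one_mul, mul_one,
    smul_smul, h]
  module

lemma rr_comm_x (c s : ℝ) (K x : A) (h : K * x = x * K) :
    rr c s K * x = x * rr c s K := by
  simp only [rr, add_mul, mul_add, smul_mul_assoc, mul_smul_comm, one_mul, mul_one, h]

lemma rr_inv (c s : ℝ) (hcs : c ^ 2 + s ^ 2 = 1) (J : A) (hJ : J * J = -1) :
    rr c s J * rr c (-s) J = 1 := by
  simp only [rr, mul_add, add_mul, smul_mul_assoc, mul_smul_comm, one_mul, mul_one,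
    smul_smul, hJ, smul_neg]
  match_scalars
  all_goals (try ring)
  all_goals linear_combination hcs

lemma rr_inv' (c s : ℝ) (hcs : c ^ 2 + s ^ 2 = 1) (J : A) (hJ : J * J = -1) :
    rr c (-s) J * rr c s J = 1 := by
  have := rr_inv c (-s) (by linear_combination hcs) J hJ
  rwa [neg_neg] at this

lemma rr_sandwich (c s : ℝ) (J x : A) (hJ : J * J = -1) (hx : J * x = -(x * J)) :
    rr c s J * x * rr c (-s) J = (c^2 - s^2) • x + (-(2*(c*s))) • (x * J) := by
  have key2 : (x * J) * J = -x := by rw [mul_assoc, hJ, mul_neg_one]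
  simp only [rr, mul_add, add_mul, smul_mul_assoc, mul_smul_comm, one_mul, mul_one,
    smul_smul, hx, neg_mul, key2, smul_neg, neg_neg, mul_neg]
  module

/-- Conjugation of an element anticommuting with `J` and commuting with `K`. -/
lemma conjA (c s : ℝ) (hcs : c ^ 2 + s ^ 2 = 1) (J K x : A)
    (hJJ : J * J = -1) (hKK : K * K = -1) (hKJ : K * J = J * K)
    (hJx : J * x = -(x * J)) (hKx : K * x = x * K) :
    (rr c s J * rr c (-s) K) * x * (rr c (-s) J * rr c s K)
      = (c^2 - s^2) • x + (-(2*(c*s))) • (x * J) := by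
  have e1 : rr c s J * rr c (-s) K * x = rr c s J * x * rr c (-s) K := by
    rw [mul_assoc, rr_comm_x c (-s) K x hKx, ← mul_assoc]
  have e2 : rr c (-s) K * (rr c (-s) J * rr c s K) = rr c (-s) J := by
    rw [← mul_assoc, rr_comm c (-s) c (-s) J K hKJ, mul_assoc,
      rr_inv' c s hcs K hKK, mul_one]
  calc (rr c s J * rr c (-s) K) * x * (rr c (-s) J * rr c s K)
      = rr c s J * x * rr c (-s) K * (rr c (-s) J * rr c s K) := by rw [e1]
    _ = rr c s J * x * (rr c (-s) K * (rr c (-s) J * rr c s K)) := by rw [mul_assoc]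
    _ = rr c s J * x * rr c (-s) J := by rw [e2]
    _ = _ := rr_sandwich c s J x hJJ hJx

/-- Conjugation of an element commuting with `J` and anticommuting with `K`. -/
lemma conjB (c s : ℝ) (hcs : c ^ 2 + s ^ 2 = 1) (J K x : A)
    (hJJ : J * J = -1) (hKK : K * K = -1) (hKJ : K * J = J * K)
    (hJx : J * x = x * J) (hKx : K * x = -(x * K)) :
    (rr c s J * rr c (-s) K) * x * (rr c (-s) J * rr c s K)
      = (c^2 - s^2) • x + (2*(c*s)) • (x * K) := by
  have e1 : rr c s J * rr c (-s) K * x = rr c (-s) K * x * rr c s J := by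
    rw [rr_comm c s c (-s) K J hKJ.symm, mul_assoc, rr_comm_x c s J x hJx, ← mul_assoc]
  have e2 : rr c s J * (rr c (-s) J * rr c s K) = rr c s K := by
    rw [← mul_assoc, rr_inv c s hcs J hJJ, one_mul]
  calc (rr c s J * rr c (-s) K) * x * (rr c (-s) J * rr c s K)
      = rr c (-s) K * x * rr c s J * (rr c (-s) J * rr c s K) := by rw [e1]
    _ = rr c (-s) K * x * (rr c s J * (rr c (-s) J * rr c s K)) := by rw [mul_assoc]
    _ = rr c (-s) K * x * rr c s K := by rw [e2]
    _ = (c^2 - (-s)^2) • x + (-(2*(c*(-s)))) • (x * K) := by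
        have := rr_sandwich c (-s) K x hKK hKx
        rwa [neg_neg] at this
    _ = _ := by module

/-- Conjugation of an element commuting with both `J` and `K`. -/
lemma conjC (c s : ℝ) (hcs : c ^ 2 + s ^ 2 = 1) (J K x : A)
    (hJJ : J * J = -1) (hKK : K * K = -1) (hKJ : K * J = J * K)
    (hJx : J * x = x * J) (hKx : K * x = x * K) :
    (rr c s J * rr c (-s) K) * x * (rr c (-s) J * rr c s K) = x := by
  have e1 : rr c s J * rr c (-s) K * x = x * (rr c s J * rr c (-s) K) := by
    rw [mul_assoc, rr_comm_x c (-s) K x hKx, ← mul_assoc, rr_comm_x c s J x hJx, mul_assoc]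
  have e2 : (rr c s J * rr c (-s) K) * (rr c (-s) J * rr c s K) = 1 := by
    rw [mul_assoc, ← mul_assoc (rr c (-s) K), rr_comm c (-s) c (-s) J K hKJ,
      mul_assoc (rr c (-s) J), rr_inv' c s hcs K hKK, mul_one,
      rr_inv c s hcs J hJJ]
  rw [e1, mul_assoc, e2, mul_one]

/- Concrete operator-level relations. -/

local notation "V3" => EuclideanSpace ℝ (Fin 3)
local notation "Ext3" => ExteriorAlgebra ℝ (EuclideanSpace ℝ (Fin 3))

lemma wedgeOp_add (x y : V3) : wedgeOp (x + y) = wedgeOp x + wedgeOp y := by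
  refine LinearMap.ext fun z => ?_
  simp [wedgeOp, add_mul]

lemma wedgeOp_smul (r : ℝ) (x : V3) : wedgeOp (r • x) = r • wedgeOp x := by
  refine LinearMap.ext fun z => ?_
  simp [wedgeOp, smul_mul_assoc]

lemma wedge_mul_wedge (x y : V3) :
    wedgeOp x * wedgeOp y = -(wedgeOp y * wedgeOp x) := by
  refine LinearMap.ext fun z => ?_
  have h : ExteriorAlgebra.ι ℝ x * ExteriorAlgebra.ι ℝ y
      = -(ExteriorAlgebra.ι ℝ y * ExteriorAlgebra.ι ℝ x) :=
    eq_neg_of_add_eq_zero_left (ExteriorAlgebra.ι_add_mul_swap x y)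
  simp only [wedgeOp, Module.End.mul_apply, LinearMap.mulLeft_apply, LinearMap.neg_apply,
    ← mul_assoc, h, neg_mul]

lemma wedge_sq (x : V3) : wedgeOp x * wedgeOp x = 0 := by
  refine LinearMap.ext fun z => ?_
  simp only [wedgeOp, Module.End.mul_apply, LinearMap.mulLeft_apply, LinearMap.zero_apply,
    ← mul_assoc, ExteriorAlgebra.ι_sq_zero, zero_mul]

lemma contr_mul_contr (x y : V3) :
    contrOp x * contrOp y = -(contrOp y * contrOp x) := by
  refine LinearMap.ext fun z => ?_
  simp only [contrOp, Module.End.mul_apply, LinearMap.neg_apply]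
  exact CliffordAlgebra.contractLeft_comm _ _ _

lemma contr_sq (x : V3) : contrOp x * contrOp x = 0 := by
  refine LinearMap.ext fun z => ?_
  simp only [contrOp, Module.End.mul_apply, LinearMap.zero_apply]
  exact CliffordAlgebra.contractLeft_contractLeft _ _

lemma contr_mul_wedge (x y : V3) :
    contrOp x * wedgeOp y = ⟪x, y⟫ • (1 : Ext3 →ₗ[ℝ] Ext3) - wedgeOp y * contrOp x := by
  refine LinearMap.ext fun z => ?_
  simp only [contrOp, wedgeOp, Module.End.mul_apply, LinearMap.sub_apply, LinearMap.smul_apply,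
    Module.End.one_apply, LinearMap.mulLeft_apply]
  have := CliffordAlgebra.contractLeft_ι_mul (Q := (0 : QuadraticForm ℝ V3))
    (d := innerₗ V3 x) y z
  simpa using this

end RotAux

open RotAux

set_option maxHeartbeats 2000000 in
/-- circular rotation of points by an angle `θ` in the plane of `u` and `v`. -/
theorem rotation_of_point (u v p : EuclideanSpace ℝ (Fin 3))
    (huv : ⟪u, v⟫ = 0) (hu : ‖u‖ = 1) (hv : ‖v‖ = 1) (θ : ℝ) :
    ((Real.cos (θ / 2) • LinearMap.id + Real.sin (θ / 2) • rotGen1 u v) ∘ₗ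
          (Real.cos (θ / 2) • LinearMap.id - Real.sin (θ / 2) • rotGen2 u v)) ∘ₗ
        wedgeOp p ∘ₗ
        ((Real.cos (θ / 2) • LinearMap.id - Real.sin (θ / 2) • rotGen1 u v) ∘ₗ
          (Real.cos (θ / 2) • LinearMap.id + Real.sin (θ / 2) • rotGen2 u v))
      = wedgeOp ((p - ⟪p, u⟫ • u - ⟪p, v⟫ • v)
          + (Real.cos θ * ⟪p, u⟫ + Real.sin θ * ⟪p, v⟫) • u
          + (Real.cos θ * ⟪p, v⟫ - Real.sin θ * ⟪p, u⟫) • v) := by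
  -- scalar abbreviations and facts
  set c := Real.cos (θ / 2) with hc
  set s := Real.sin (θ / 2) with hs
  have hcs : c ^ 2 + s ^ 2 = 1 := by
    rw [hc, hs]; linear_combination Real.sin_sq_add_cos_sq (θ / 2)
  have hcos' : Real.cos θ = c ^ 2 - s ^ 2 := by
    rw [hc, hs, ← Real.cos_two_mul']; congr 1; ring
  have hsin' : Real.sin θ = 2 * (c * s) := by
    rw [hc, hs, show θ = 2 * (θ / 2) by ring, Real.sin_two_mul]; ring
  -- inner product facts
  have hvu : ⟪v, u⟫ = 0 := by rw [real_inner_comm]; exact huv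
  have huu : ⟪u, u⟫ = (1 : ℝ) := by
    rw [real_inner_self_eq_norm_mul_norm, hu, one_mul]
  have hvv : ⟪v, v⟫ = (1 : ℝ) := by
    rw [real_inner_self_eq_norm_mul_norm, hv, one_mul]
  set w := p - ⟪p, u⟫ • u - ⟪p, v⟫ • v with hwdef
  have huw : ⟪u, w⟫ = 0 := by
    rw [hwdef, inner_sub_right, inner_sub_right, real_inner_smul_right,
      real_inner_smul_right, huu, huv, real_inner_comm u p]
    ring
  have hvw : ⟪v, w⟫ = 0 := by
    rw [hwdef, inner_sub_right, inner_sub_right, real_inner_smul_right,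
      real_inner_smul_right, hvv, hvu, real_inner_comm v p]
    ring
  -- operator atoms
  set e1 := wedgeOp u with he1def
  set e2 := wedgeOp v with he2def
  set f1 := contrOp u with hf1def
  set f2 := contrOp v with hf2def
  set P0 := wedgeOp w with hP0def
  -- basic relations
  have r1 : e1 * e1 = 0 := wedge_sq u
  have r2 : e2 * e2 = 0 := wedge_sq v
  have r3 : e2 * e1 = -(e1 * e2) := wedge_mul_wedge v u
  have r4 : f1 * f1 = 0 := contr_sq u
  have r5 : f2 * f2 = 0 := contr_sq v
  have r6 : f2 * f1 = -(f1 * f2) := contr_mul_contr v u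
  have r7 : f1 * e1 = 1 - e1 * f1 := by
    have h := contr_mul_wedge u u; rw [huu, one_smul] at h; exact h
  have r8 : f2 * e2 = 1 - e2 * f2 := by
    have h := contr_mul_wedge v v; rw [hvv, one_smul] at h; exact h
  have r9 : f1 * e2 = -(e2 * f1) := by
    have h := contr_mul_wedge u v; rw [huv, zero_smul, zero_sub] at h; exact h
  have r10 : f2 * e1 = -(e1 * f2) := by
    have h := contr_mul_wedge v u; rw [hvu, zero_smul, zero_sub] at h; exact h
  have rP1 : e1 * P0 = -(P0 * e1) := wedge_mul_wedge u w
  have rP2 : e2 * P0 = -(P0 * e2) := wedge_mul_wedge v w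
  have rP3 : f1 * P0 = -(P0 * f1) := by
    have h := contr_mul_wedge u w; rw [huw, zero_smul, zero_sub] at h; exact h
  have rP4 : f2 * P0 = -(P0 * f2) := by
    have h := contr_mul_wedge v w; rw [hvw, zero_smul, zero_sub] at h; exact h
  -- Clifford-type generators
  set a := e1 + f1 with hadef
  set b := e2 + f2 with hbdef
  set cc := e1 - f1 with hccdef
  set dd := e2 - f2 with hdddef
  have haa : a * a = 1 := by
    simp only [hadef, add_mul, mul_add, r1, r4, r7]; abel
  have hbb : b * b = 1 := by
    simp only [hbdef, add_mul, mul_add, r2, r5, r8]; abel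
  have hcc2 : cc * cc = -1 := by
    simp only [hccdef, sub_mul, mul_sub, r1, r4, r7]; abel
  have hdd2 : dd * dd = -1 := by
    simp only [hdddef, sub_mul, mul_sub, r2, r5, r8]; abel
  have hba : b * a = -(a * b) := by
    simp only [hadef, hbdef, add_mul, mul_add, r3, r6, r9, r10]; abel
  have hca : cc * a = -(a * cc) := by
    simp only [hadef, hccdef, add_mul, mul_add, sub_mul, mul_sub, r1, r4, r7]; abel
  have hda : dd * a = -(a * dd) := by
    simp only [hadef, hdddef, add_mul, mul_add, sub_mul, mul_sub, r3, r6, r9, r10]; abel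
  have hcb : cc * b = -(b * cc) := by
    simp only [hbdef, hccdef, add_mul, mul_add, sub_mul, mul_sub, r3, r6, r9, r10]; abel
  have hdb : dd * b = -(b * dd) := by
    simp only [hbdef, hdddef, add_mul, mul_add, sub_mul, mul_sub, r2, r5, r8]; abel
  have hdc : dd * cc = -(cc * dd) := by
    simp only [hccdef, hdddef, sub_mul, mul_sub, r3, r6, r9, r10]; abel
  have haP : a * P0 = -(P0 * a) := by
    simp only [hadef, add_mul, mul_add, rP1, rP3]; abel
  have hbP : b * P0 = -(P0 * b) := by
    simp only [hbdef, add_mul, mul_add, rP2, rP4]; abel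
  have hcP : cc * P0 = -(P0 * cc) := by
    simp only [hccdef, sub_mul, mul_sub, rP1, rP3]; abel
  have hdP : dd * P0 = -(P0 * dd) := by
    simp only [hdddef, sub_mul, mul_sub, rP2, rP4]; abel
  -- the two rotation generators
  set J := a * b with hJdef
  set K := cc * dd with hKdef
  have hJJ : J * J = -1 := by
    rw [hJdef, sq_of_anti a b hba, haa, hbb, one_mul]
  have hKK : K * K = -1 := by
    rw [hKdef, sq_of_anti cc dd hdc, hcc2, hdd2]; norm_num
  have hac : a * cc = -(cc * a) := by rw [hca, neg_neg]
  have hbc : b * cc = -(cc * b) := by rw [hcb, neg_neg]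
  have had : a * dd = -(dd * a) := by rw [hda, neg_neg]
  have hbd : b * dd = -(dd * b) := by rw [hdb, neg_neg]
  have hJc : J * cc = cc * J := by rw [hJdef]; exact anti_anti_comm a b cc hac hbc
  have hJd : J * dd = dd * J := by rw [hJdef]; exact anti_anti_comm a b dd had hbd
  have hKa : K * a = a * K := by rw [hKdef]; exact anti_anti_comm cc dd a hca hda
  have hKb : K * b = b * K := by rw [hKdef]; exact anti_anti_comm cc dd b hcb hdb
  have hKJ : K * J = J * K := by
    rw [hKdef]; exact comm_mul cc dd J hJc.symm hJd.symm
  have hJP : J * P0 = P0 * J := by rw [hJdef]; exact anti_anti_comm a b P0 haP hbP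
  have hKP : K * P0 = P0 * K := by rw [hKdef]; exact anti_anti_comm cc dd P0 hcP hdP
  have hJa : J * a = -(a * J) := by rw [hJdef, mul_assoc, hba]; exact mul_neg a J
  have hJb : J * b = -(b * J) := by rw [hJdef]; exact swap_sqP a b hbb hba
  have hKc : K * cc = -(cc * K) := by rw [hKdef, mul_assoc, hdc]; exact mul_neg cc K
  have hKd : K * dd = -(dd * K) := by rw [hKdef]; exact swap_sqN cc dd hdd2 hdc
  have haJ : a * J = b := by rw [hJdef, ← mul_assoc, haa, one_mul]
  have hbJ : b * J = -a := by
    rw [hJdef, ← mul_assoc, hba, show -J * b = -(J * b) from neg_mul J b, hJdef, mul_assoc, hbb, mul_one]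
  have hcK : cc * K = -dd := by rw [hKdef, ← mul_assoc, hcc2]; exact neg_one_mul dd
  have hdK : dd * K = cc := by
    rw [hKdef, ← mul_assoc, hdc, show -K * dd = -(K * dd) from neg_mul K dd, hKdef, mul_assoc, hdd2]
    exact (congrArg Neg.neg (mul_neg_one cc)).trans (neg_neg cc)
  -- identify the rotation generators
  have hG1 : rotGen1 u v = J := by
    rw [hJdef]
    have h : rotGen1 u v = (1 / 2 : ℝ) • (a * b - b * a) := rfl
    rw [h, hba, sub_neg_eq_add]
    module
  have hG2 : rotGen2 u v = K := by
    rw [hKdef]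
    have h : rotGen2 u v = (1 / 2 : ℝ) • (cc * dd - dd * cc) := rfl
    rw [h, hdc, sub_neg_eq_add]
    module
  rw [hG1, hG2]
  -- rewrite the four rotation factors in `rr` form
  have key1 : c • (LinearMap.id : ExteriorAlgebra ℝ (EuclideanSpace ℝ (Fin 3)) →ₗ[ℝ]
      ExteriorAlgebra ℝ (EuclideanSpace ℝ (Fin 3))) + s • J = rr c s J := rfl
  have key2 : c • (LinearMap.id : ExteriorAlgebra ℝ (EuclideanSpace ℝ (Fin 3)) →ₗ[ℝ]
      ExteriorAlgebra ℝ (EuclideanSpace ℝ (Fin 3))) - s • J = rr c (-s) J :=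
    (rr_eq_sub c s J).symm
  have key3 : c • (LinearMap.id : ExteriorAlgebra ℝ (EuclideanSpace ℝ (Fin 3)) →ₗ[ℝ]
      ExteriorAlgebra ℝ (EuclideanSpace ℝ (Fin 3))) + s • K = rr c s K := rfl
  have key4 : c • (LinearMap.id : ExteriorAlgebra ℝ (EuclideanSpace ℝ (Fin 3)) →ₗ[ℝ]
      ExteriorAlgebra ℝ (EuclideanSpace ℝ (Fin 3))) - s • K = rr c (-s) K :=
    (rr_eq_sub c s K).symm
  rw [key1, key2, key3, key4]
  simp only [← Module.End.mul_eq_comp]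
  -- decompose `wedgeOp p`
  have hp : p = w + ⟪p, u⟫ • u + ⟪p, v⟫ • v := by rw [hwdef]; module
  have hWp0 : wedgeOp p = P0 + ⟪p, u⟫ • e1 + ⟪p, v⟫ • e2 := by
    calc wedgeOp p = wedgeOp (w + ⟪p, u⟫ • u + ⟪p, v⟫ • v) := by rw [← hp]
      _ = P0 + ⟪p, u⟫ • e1 + ⟪p, v⟫ • e2 := by
          rw [wedgeOp_add, wedgeOp_add, wedgeOp_smul, wedgeOp_smul, ← hP0def,
            ← he1def, ← he2def]
  have hWp : wedgeOp p = P0 + (⟪p, u⟫ / 2) • a + (⟪p, u⟫ / 2) • cc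
      + (⟪p, v⟫ / 2) • b + (⟪p, v⟫ / 2) • dd := by
    rw [hWp0, hadef, hbdef, hccdef, hdddef]; module
  -- abbreviate the two rotor factors
  set Aop := rr c s J * rr c (-s) K with hAdef
  set Bop := rr c (-s) J * rr c s K with hBdef
  -- conjugation of each atom
  have cjP : Aop * (P0 * Bop) = P0 := by
    rw [hAdef, hBdef, ← mul_assoc]
    exact conjC c s hcs J K P0 hJJ hKK hKJ hJP hKP
  have cja : Aop * (a * Bop) = (c^2 - s^2) • a + (-(2*(c*s))) • b := by
    rw [hAdef, hBdef, ← mul_assoc]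
    have h := conjA c s hcs J K a hJJ hKK hKJ hJa hKa
    rwa [haJ] at h
  have cjb : Aop * (b * Bop) = (c^2 - s^2) • b + (-(2*(c*s))) • (-a) := by
    rw [hAdef, hBdef, ← mul_assoc]
    have h := conjA c s hcs J K b hJJ hKK hKJ hJb hKb
    rwa [hbJ] at h
  have cjc : Aop * (cc * Bop) = (c^2 - s^2) • cc + (2*(c*s)) • (-dd) := by
    rw [hAdef, hBdef, ← mul_assoc]
    have h := conjB c s hcs J K cc hJJ hKK hKJ hJc hKc
    rwa [hcK] at h
  have cjd : Aop * (dd * Bop) = (c^2 - s^2) • dd + (2*(c*s)) • cc := by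
    rw [hAdef, hBdef, ← mul_assoc]
    have h := conjB c s hcs J K dd hJJ hKK hKJ hJd hKd
    rwa [hdK] at h
  -- assemble
  rw [wedgeOp_add, wedgeOp_add, wedgeOp_smul, wedgeOp_smul, ← hP0def, ← he1def, ← he2def]
  rw [hWp]
  simp only [add_mul, mul_add, smul_mul_assoc, mul_smul_comm]
  rw [cjP, cja, cjb, cjc, cjd, hcos', hsin']
  rw [hadef, hbdef, hccdef, hdddef]
  module

end
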